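/- arXiv:1301.2691 — 8 statements merged into one kernel-verified Lean document; each statement's English description precedes it below -/
import Mathlib

section
/- With the Pascal automaton of period p coprime with b and final states R × Z/ψZ (for R ⊆ Z/pZ), a word u is accepted if and only if val(u) mod p ∈ R. Consequently the set of numbers accepted by the Pascal automaton is exactly {n ∈ ℕ : n mod p ∈ R}. -/
/-- Value of a word of digits, read least-significant-digit-first. -/
def wordVal (b : ℕ) : List ℕ → ℕ
  | [] => 0
  | a :: u => a + b * wordVal b u

/-- Transition function of the Pascal automaton: `(s,t)·a = (s + a·b^t, t+1)`. -/
def pascalStep (b p ψ : ℕ) (q : ZMod p × ZMod ψ) (a : ℕ) : ZMod p × ZMod ψ :=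
  (q.1 + (a : ZMod p) * (b : ZMod p) ^ q.2.val, q.2 + 1)

lemma wordVal_eq_ofDigits (b : ℕ) (u : List ℕ) : wordVal b u = Nat.ofDigits b u := by
  induction u with
  | nil => simp [wordVal]
  | cons a u ih => simp [wordVal, Nat.ofDigits_cons, ih]

/-- With final states `R × ZMod ψ`, a word is accepted by the Pascal automaton
iff its value mod `p` lies in `R`; hence the set of accepted numbers is
`{n | n mod p ∈ R}`. -/
theorem pascal_accepts (b p ψ : ℕ) (hb : 2 ≤ b) (hp : 1 ≤ p)
    (hcop : Nat.Coprime b p) (hψ : ψ = orderOf (b : ZMod p))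
    (R : Set (ZMod p)) :
    (∀ u : List ℕ, (∀ d ∈ u, d < b) →
        ((List.foldl (pascalStep b p ψ) (0, 0) u).1 ∈ R ↔
          ((wordVal b u : ZMod p)) ∈ R)) ∧
    (∀ n : ℕ,
        (∃ u : List ℕ, (∀ d ∈ u, d < b) ∧ wordVal b u = n ∧
            (List.foldl (pascalStep b p ψ) (0, 0) u).1 ∈ R) ↔
          ((n : ZMod p)) ∈ R) := by
  haveI : NeZero p := ⟨by omega⟩
  have hu : IsUnit (b : ZMod p) := (ZMod.isUnit_iff_coprime b p).mpr hcop
  have hψpos : 0 < ψ := by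
    rw [hψ, ← hu.unit_spec, orderOf_units]
    exact orderOf_pos hu.unit
  haveI : NeZero ψ := ⟨hψpos.ne'⟩
  have hpow : ∀ n : ℕ, (b : ZMod p) ^ ((n : ZMod ψ)).val = (b : ZMod p) ^ n := by
    intro n
    rw [ZMod.val_natCast, hψ, pow_mod_orderOf]
  have aux : ∀ (u : List ℕ) (s : ZMod p) (n : ℕ),
      (List.foldl (pascalStep b p ψ) (s, (n : ZMod ψ)) u).1
        = s + (wordVal b u : ZMod p) * (b : ZMod p) ^ n := by
    intro u
    induction u with
    | nil => intro s n; simp [wordVal]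
    | cons a u ih =>
      intro s n
      have h1 : ((n : ZMod ψ) + 1) = ((n + 1 : ℕ) : ZMod ψ) := by push_cast; ring
      simp only [List.foldl_cons, pascalStep, h1, ih, hpow, wordVal]
      push_cast
      ring
  have key : ∀ u : List ℕ,
      (List.foldl (pascalStep b p ψ) (0, 0) u).1 = (wordVal b u : ZMod p) := by
    intro u
    have h0 : ((0 : ZMod ψ)) = ((0 : ℕ) : ZMod ψ) := by norm_num
    rw [h0, aux]
    simp
  constructor
  · intro u _
    rw [key]
  · intro n
    constructor
    · rintro ⟨u, _, hval, hmem⟩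
      rw [key, hval] at hmem
      exact hmem
    · intro hn
      refine ⟨Nat.digits b n, fun d hd => Nat.digits_lt_base hb hd, ?_, ?_⟩
      · rw [wordVal_eq_ofDigits, Nat.ofDigits_digits]
      · rw [key, wordVal_eq_ofDigits, Nat.ofDigits_digits]
        exact hn
end

section
/- Let φ be a surjective automaton morphism (covering) from the modified Pascal automaton P'_{R,p} (with canonical parameters: p the smallest period and R the corresponding residues) onto a deterministic automaton A'. If (x,y) and (x',y') are states of P'_{R,p} with x ≠ x' and φ(x,y) = φ(x',y'), then y ≠ y'. -/
/-- Action of letter `0` in the modified Pascal automaton: `(s,t) ↦ (s, t+1)`. -/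
def mpZero (p ψ : ℕ) (q : ZMod p × ZMod ψ) : ZMod p × ZMod ψ := (q.1, q.2 + 1)

/-- Action of letter `g` in the modified Pascal automaton: `(s,t) ↦ (s + b^t, t)`. -/
def mpG (b p ψ : ℕ) (q : ZMod p × ZMod ψ) : ZMod p × ZMod ψ :=
  (q.1 + (b : ZMod p) ^ q.2.val, q.2)

/-- If `φ` is a covering from the modified Pascal automaton `P'_{R,p}` (with
canonical parameters) onto a deterministic automaton `A'`, then two distinct
states with the same image have distinct second components. -/
theorem covering_separates_rows (b p ψ : ℕ) (hb : 2 ≤ b) (hp : 1 ≤ p)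
    (hcop : Nat.Coprime b p) (hψ : ψ = orderOf (b : ZMod p))
    (R : Set (ZMod p))
    -- `(p, R)` is canonical: no positive `q < p` is a period of `{n | n mod p ∈ R}`
    (hcan : ∀ q : ℕ, 0 < q → q < p →
      ∃ n : ℕ, ¬ (((n : ZMod p) ∈ R) ↔ (((n + q : ℕ) : ZMod p) ∈ R)))
    {Q' : Type} (z' g' : Q' → Q') (F' : Set Q')
    (φ : ZMod p × ZMod ψ → Q')
    (hsurj : Function.Surjective φ)
    (hz : ∀ q, φ (mpZero p ψ q) = z' (φ q))
    (hg : ∀ q, φ (mpG b p ψ q) = g' (φ q))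
    (hF : ∀ q : ZMod p × ZMod ψ, q.1 ∈ R ↔ φ q ∈ F') :
    ∀ (x x' : ZMod p) (y y' : ZMod ψ),
      x ≠ x' → φ (x, y) = φ (x', y') → y ≠ y' := by
  intro x x' y y' hxx heq hyy
  subst hyy
  haveI : NeZero p := ⟨by omega⟩
  set c : ZMod p := (b : ZMod p) ^ y.val with hc
  -- iterate letter g
  have key : ∀ k : ℕ, φ (x + (k : ZMod p) * c, y) = φ (x' + (k : ZMod p) * c, y) := by
    intro k
    induction k with
    | zero => simpa using heq
    | succ k ih =>
        have h1 : mpG b p ψ (x + (k : ZMod p) * c, y) = (x + ((k : ℕ) + 1 : ℕ) * c, y) := by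
          simp [mpG, hc]; push_cast; ring
        have h2 : mpG b p ψ (x' + (k : ZMod p) * c, y) = (x' + ((k : ℕ) + 1 : ℕ) * c, y) := by
          simp [mpG, hc]; push_cast; ring
        calc φ (x + ((k : ℕ) + 1 : ℕ) * c, y) = g' (φ (x + (k : ZMod p) * c, y)) := by
              rw [← h1, hg]
          _ = g' (φ (x' + (k : ZMod p) * c, y)) := by rw [ih]
          _ = φ (x' + ((k : ℕ) + 1 : ℕ) * c, y) := by rw [← hg, h2]
  -- c is a unit
  have hu : IsUnit c := IsUnit.pow _ ⟨ZMod.unitOfCoprime b hcop, ZMod.coe_unitOfCoprime b hcop⟩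
  obtain ⟨u, hu⟩ := hu
  -- shift invariance of R by d := x' - x
  have shift : ∀ s : ZMod p, s ∈ R ↔ s + (x' - x) ∈ R := by
    intro s
    set k : ℕ := ((s - x) * ↑u⁻¹).val with hk
    have hkc : (k : ZMod p) * c = s - x := by
      rw [hk, ZMod.natCast_val, ZMod.cast_id, ← hu]
      simp [mul_assoc]
    have e1 : x + (k : ZMod p) * c = s := by rw [hkc]; ring
    have e2 : x' + (k : ZMod p) * c = s + (x' - x) := by rw [hkc]; ring
    have h1 : s ∈ R ↔ φ (x' + (k : ZMod p) * c, y) ∈ F' := by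
      rw [← e1, ← key k]; exact hF (x + (k : ZMod p) * c, y)
    have h2 : s + (x' - x) ∈ R ↔ φ (x' + (k : ZMod p) * c, y) ∈ F' := by
      rw [← e2]; exact hF (x' + (k : ZMod p) * c, y)
    exact h1.trans h2.symm
  -- derive contradiction with canonicity
  set d : ZMod p := x' - x with hd
  have hdne : d ≠ 0 := sub_ne_zero.mpr (Ne.symm hxx)
  have hq0 : 0 < d.val :=
    Nat.pos_of_ne_zero (fun h => hdne ((ZMod.val_eq_zero d).mp h))
  obtain ⟨n, hn⟩ := hcan d.val hq0 (ZMod.val_lt d)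
  apply hn
  have : ((n + d.val : ℕ) : ZMod p) = (n : ZMod p) + d := by
    push_cast [ZMod.natCast_val, ZMod.cast_id]; ring
  rw [this]
  exact shift (n : ZMod p)
end

section
/- Let φ be a covering from the modified Pascal automaton P'_{R,p} onto a minimal automaton A' with initial state i. Then p equals the length of the g-circuit of A' containing i, and R = { r : i·g^r is final }. -/
/-- Run of the automaton `A'` over the alphabet `{0, g}` (encoded as `Bool`,
`false` being `0` and `true` being `g`). -/
def runB {Q' : Type} (z' g' : Q' → Q') (q : Q') (w : List Bool) : Q' :=
  List.foldl (fun q a => if a then g' q else z' q) q w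

/-- If `φ` is a covering from the modified Pascal automaton `P'_{R,p}` (with
canonical parameters) onto a minimal automaton `A'` with initial state
`i = φ(0,0)`, then `p` is the length of the `g`-circuit of `A'` containing `i`
and `R = {r | i·g^r ∈ F'}`. -/
theorem parameters_read_in_quotient (b p ψ : ℕ) (hb : 2 ≤ b) (hp : 1 ≤ p)
    (hcop : Nat.Coprime b p) (hψ : ψ = orderOf (b : ZMod p))
    (R : Set (ZMod p))
    (hcan : ∀ q : ℕ, 0 < q → q < p →
      ∃ n : ℕ, ¬ (((n : ZMod p) ∈ R) ↔ (((n + q : ℕ) : ZMod p) ∈ R)))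
    {Q' : Type} (z' g' : Q' → Q') (F' : Set Q')
    (φ : ZMod p × ZMod ψ → Q')
    (hsurj : Function.Surjective φ)
    (hz : ∀ q, φ (mpZero p ψ q) = z' (φ q))
    (hg : ∀ q, φ (mpG b p ψ q) = g' (φ q))
    (hF : ∀ q : ZMod p × ZMod ψ, q.1 ∈ R ↔ φ q ∈ F')
    -- minimality of `A'`: accessibility and separation of states
    (hacc : ∀ q : Q', ∃ w : List Bool, runB z' g' (φ (0, 0)) w = q)
    (hsep : ∀ q₁ q₂ : Q',
      (∀ w : List Bool, runB z' g' q₁ w ∈ F' ↔ runB z' g' q₂ w ∈ F') → q₁ = q₂) :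
    IsLeast {k : ℕ | 0 < k ∧ g'^[k] (φ (0, 0)) = φ (0, 0)} p ∧
    R = {r : ZMod p | g'^[r.val] (φ (0, 0)) ∈ F'} := by
  haveI : NeZero p := ⟨by omega⟩
  have hval0 : (0 : ZMod ψ).val = 0 := by
    cases ψ with
    | zero => rfl
    | succ m => exact ZMod.val_zero
  have hGiter : ∀ (n : ℕ) (s : ZMod p), (mpG b p ψ)^[n] (s, 0) = (s + n, 0) := by
    intro n
    induction n with
    | zero => intro s; simp
    | succ m ih =>
      intro s
      rw [Function.iterate_succ_apply]
      have h1 : mpG b p ψ (s, 0) = (s + 1, 0) := by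
        simp [mpG, hval0]
      rw [h1, ih]
      push_cast
      ring_nf
  have hg_iter : ∀ (n : ℕ) (q : ZMod p × ZMod ψ),
      g'^[n] (φ q) = φ ((mpG b p ψ)^[n] q) := by
    intro n
    induction n with
    | zero => intro q; simp
    | succ m ih =>
      intro q
      rw [Function.iterate_succ_apply, Function.iterate_succ_apply, ← hg, ih]
  have key : ∀ n : ℕ, g'^[n] (φ (0, 0)) = φ (((n : ZMod p), 0)) := by
    intro n
    rw [hg_iter, hGiter, zero_add]
  constructor
  · constructor
    · refine ⟨by omega, ?_⟩
      rw [key p, ZMod.natCast_self]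
    · intro k hk
      obtain ⟨hk0, hkfix⟩ := hk
      by_contra hlt
      push_neg at hlt
      obtain ⟨n, hn⟩ := hcan k hk0 hlt
      apply hn
      have h2 := congrArg (g'^[n]) hkfix
      rw [← Function.iterate_add_apply, key, key n] at h2
      have h3 : ((n + k : ℕ) : ZMod p) = ((n + k : ℕ) : ZMod p) := rfl
      rw [hF (((n : ZMod p), 0)), hF ((((n + k : ℕ) : ZMod p), 0))]
      have hcast : ((n + k : ℕ) : ZMod p) = ((k + n : ℕ) : ZMod p) := by
        rw [Nat.add_comm]
      rw [hcast]
      push_cast at h2 ⊢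
      rw [add_comm] at h2
      rw [h2]
  · ext r
    simp only [Set.mem_setOf_eq]
    rw [key r.val, ZMod.natCast_val, ZMod.cast_id]
    exact hF ((r, 0))
end

section
/- Let G = Z/pZ ⋊ Z/ψZ be the semidirect product with multiplication (s,t)(x,y) = (x·b^t + s, y + t). Let φ : P'_{R,p} → A' be a covering, and let (s,t) be a state φ-equivalent to (0,0) with smallest positive second component t. Then the φ-equivalence class of (0,0) is exactly the orbit of (0,0) under left multiplication by (s,t). -/
/-- Left multiplication by `(s,t)` in the semidirect product
`Z/pZ ⋊ Z/ψZ`: `(s,t)(x,y) = (x·b^t + s, y + t)`. -/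
def lmulST (b p ψ : ℕ) (s : ZMod p) (t : ZMod ψ) (q : ZMod p × ZMod ψ) :
    ZMod p × ZMod ψ :=
  (q.1 * (b : ZMod p) ^ t.val + s, q.2 + t)


namespace PascalOrbit

/-- semidirect product multiplication -/
def gmul (b p ψ : ℕ) (u w : ZMod p × ZMod ψ) : ZMod p × ZMod ψ :=
  (w.1 * (b : ZMod p) ^ u.2.val + u.1, u.2 + w.2)

lemma gmul_def (b p ψ : ℕ) (u w : ZMod p × ZMod ψ) :
    gmul b p ψ u w = (w.1 * (b : ZMod p) ^ u.2.val + u.1, u.2 + w.2) := rfl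

lemma pow_mod (b p ψ : ℕ) (h1 : (b : ZMod p) ^ ψ = 1) (m : ℕ) :
    (b : ZMod p) ^ (m % ψ) = (b : ZMod p) ^ m := by
  conv_rhs => rw [← Nat.div_add_mod m ψ]
  rw [pow_add, pow_mul, h1, one_pow, one_mul]

lemma pow_val_add (b p ψ : ℕ) [NeZero ψ] (h1 : (b : ZMod p) ^ ψ = 1) (x y : ZMod ψ) :
    (b : ZMod p) ^ (x + y).val = (b : ZMod p) ^ x.val * (b : ZMod p) ^ y.val := by
  rw [ZMod.val_add, pow_mod b p ψ h1, pow_add]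

lemma gmul_assoc (b p ψ : ℕ) [NeZero ψ] (h1 : (b : ZMod p) ^ ψ = 1)
    (u v w : ZMod p × ZMod ψ) :
    gmul b p ψ (gmul b p ψ u v) w = gmul b p ψ u (gmul b p ψ v w) := by
  unfold gmul
  refine Prod.ext ?_ ?_
  · simp only
    rw [pow_val_add b p ψ h1]
    ring
  · simp only
    rw [add_assoc]

lemma gmul_e_left (b p ψ : ℕ) [NeZero ψ] (w : ZMod p × ZMod ψ) :
    gmul b p ψ (0, 0) w = w := by
  unfold gmul
  simp [ZMod.val_zero]

lemma gmul_e_right (b p ψ : ℕ) (u : ZMod p × ZMod ψ) :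
    gmul b p ψ u (0, 0) = u := by
  unfold gmul
  simp

lemma mpG_iter (b p ψ : ℕ) (k : ℕ) (u : ZMod p × ZMod ψ) :
    (mpG b p ψ)^[k] u = (u.1 + (k : ZMod p) * (b : ZMod p) ^ u.2.val, u.2) := by
  induction k with
  | zero => simp
  | succ k ih =>
      rw [Function.iterate_succ_apply', ih]
      unfold mpG
      refine Prod.ext ?_ rfl
      simp only
      push_cast
      ring

lemma mpZero_iter (p ψ : ℕ) (k : ℕ) (u : ZMod p × ZMod ψ) :
    (mpZero p ψ)^[k] u = (u.1, u.2 + (k : ZMod ψ)) := by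
  induction k with
  | zero => simp
  | succ k ih =>
      rw [Function.iterate_succ_apply', ih]
      unfold mpZero
      refine Prod.ext rfl ?_
      simp only
      push_cast
      ring

lemma gmul_eq_iter (b p ψ : ℕ) [NeZero p] [NeZero ψ] (u w : ZMod p × ZMod ψ) :
    gmul b p ψ u w = (mpZero p ψ)^[w.2.val] ((mpG b p ψ)^[w.1.val] u) := by
  rw [mpG_iter, mpZero_iter]
  unfold gmul
  refine Prod.ext ?_ ?_
  · simp only
    rw [ZMod.natCast_rightInverse w.1]
    ring
  · simp only
    rw [ZMod.natCast_rightInverse w.2]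

end PascalOrbit


open PascalOrbit in
/-- If `(s,t)` is the state `φ`-equivalent to `(0,0)` with smallest positive
second component, then the `φ`-class of `(0,0)` is exactly the orbit of `(0,0)`
under left multiplication by `(s,t)`. -/
theorem class_is_orbit (b p ψ : ℕ) (hb : 2 ≤ b) (hp : 1 ≤ p)
    (hcop : Nat.Coprime b p) (hψ : ψ = orderOf (b : ZMod p))
    (R : Set (ZMod p))
    (hcan : ∀ q : ℕ, 0 < q → q < p →
      ∃ n : ℕ, ¬ (((n : ZMod p) ∈ R) ↔ (((n + q : ℕ) : ZMod p) ∈ R)))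
    {Q' : Type} (z' g' : Q' → Q') (F' : Set Q')
    (φ : ZMod p × ZMod ψ → Q')
    (hsurj : Function.Surjective φ)
    (hz : ∀ q, φ (mpZero p ψ q) = z' (φ q))
    (hg : ∀ q, φ (mpG b p ψ q) = g' (φ q))
    (hF : ∀ q : ZMod p × ZMod ψ, q.1 ∈ R ↔ φ q ∈ F')
    (s : ZMod p) (t : ZMod ψ)
    (hst : φ (s, t) = φ (0, 0)) (ht : t ≠ 0)
    (hmin : ∀ (x : ZMod p) (y : ZMod ψ),
      φ (x, y) = φ (0, 0) → y ≠ 0 → t.val ≤ y.val) :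
    {q : ZMod p × ZMod ψ | φ q = φ (0, 0)} =
      {q : ZMod p × ZMod ψ | ∃ n : ℕ, q = (lmulST b p ψ s t)^[n] (0, 0)} := by
  haveI : NeZero p := ⟨by omega⟩
  have hunit : IsUnit (b : ZMod p) := by
    rw [ZMod.isUnit_iff_coprime]; exact hcop
  haveI : NeZero ψ := by
    constructor
    obtain ⟨u, hu⟩ := hunit
    rw [hψ, ← hu, orderOf_units]
    exact (orderOf_pos u).ne'
  have hB1 : (b : ZMod p) ^ ψ = 1 := by rw [hψ]; exact pow_orderOf_eq_one _
  -- congruence: kernel of φ is a right congruence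
  have hgz : ∀ (k : ℕ) (u v : ZMod p × ZMod ψ), φ u = φ v →
      φ ((mpZero p ψ)^[k] u) = φ ((mpZero p ψ)^[k] v) := by
    intro k
    induction k with
    | zero => intro u v h; simpa using h
    | succ k ih =>
        intro u v h
        rw [Function.iterate_succ_apply', Function.iterate_succ_apply', hz, hz,
          ih u v h]
  have hgg : ∀ (k : ℕ) (u v : ZMod p × ZMod ψ), φ u = φ v →
      φ ((mpG b p ψ)^[k] u) = φ ((mpG b p ψ)^[k] v) := by
    intro k
    induction k with
    | zero => intro u v h; simpa using h
    | succ k ih =>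
        intro u v h
        rw [Function.iterate_succ_apply', Function.iterate_succ_apply', hg, hg,
          ih u v h]
  have hcongr : ∀ u v : ZMod p × ZMod ψ, φ u = φ v →
      ∀ w, φ (gmul b p ψ u w) = φ (gmul b p ψ v w) := by
    intro u v h w
    rw [gmul_eq_iter, gmul_eq_iter]
    exact hgz _ _ _ (hgg _ _ _ h)
  -- closure of the class of e under multiplication
  have hCmul : ∀ u w : ZMod p × ZMod ψ, φ u = φ (0, 0) → φ w = φ (0, 0) →
      φ (gmul b p ψ u w) = φ (0, 0) := by
    intro u w hu hw
    rw [hcongr u (0, 0) hu w, gmul_e_left]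
    exact hw
  -- powers of (s,t)
  set L := lmulST b p ψ s t with hL
  set pw : ℕ → ZMod p × ZMod ψ := fun n => L^[n] (0, 0) with hpw
  have hLg : ∀ q, L q = gmul b p ψ (s, t) q := by
    intro q
    rw [hL, gmul_def]
    unfold lmulST
    refine Prod.ext rfl ?_
    simp only
    rw [add_comm]
  have hpw0 : pw 0 = (0, 0) := rfl
  have hpwS : ∀ n, pw (n + 1) = gmul b p ψ (s, t) (pw n) := by
    intro n
    rw [hpw]
    simp only
    rw [Function.iterate_succ_apply', hLg]
  have hpwS' : ∀ n, pw (n + 1) = gmul b p ψ (pw n) (s, t) := by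
    intro n
    induction n with
    | zero => rw [hpwS, hpw0, gmul_e_left, gmul_e_right]
    | succ n ih =>
        rw [hpwS (n + 1), ih, ← gmul_assoc b p ψ hB1, ← hpwS n, ← ih]
  have hpw_add : ∀ m n, pw (m + n) = gmul b p ψ (pw m) (pw n) := by
    intro m n
    induction n with
    | zero => rw [Nat.add_zero, hpw0, gmul_e_right]
    | succ n ih =>
        rw [← Nat.add_assoc, hpwS', ih, gmul_assoc b p ψ hB1, ← hpwS']
  have hpwC : ∀ n, φ (pw n) = φ (0, 0) := by
    intro n
    induction n with
    | zero => rw [hpw0]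
    | succ n ih =>
        rw [hpwS, hcongr (s, t) (0, 0) hst (pw n), gmul_e_left]
        exact ih
  have hpw2 : ∀ n, (pw n).2 = ((n * t.val : ℕ) : ZMod ψ) := by
    intro n
    induction n with
    | zero => simp [hpw0]
    | succ n ih =>
        rw [hpwS, gmul_def]
        simp only
        rw [ih]
        have htc : ((t.val : ℕ) : ZMod ψ) = t := ZMod.natCast_rightInverse t
        push_cast
        rw [htc]
        ring
  -- cancellation
  have hcancel : ∀ u x y : ZMod p × ZMod ψ,
      gmul b p ψ u x = gmul b p ψ u y → x = y := by
    intro u x y h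
    rw [gmul_def, gmul_def, Prod.ext_iff] at h
    obtain ⟨h1, h2⟩ := h
    simp only at h1 h2
    refine Prod.ext ?_ (by exact add_left_cancel h2)
    have hBu : IsUnit ((b : ZMod p) ^ u.2.val) := hunit.pow _
    have h1' : x.1 * (b : ZMod p) ^ u.2.val = y.1 * (b : ZMod p) ^ u.2.val :=
      add_right_cancel h1
    exact hBu.mul_right_cancel h1'
  -- elements of the class with second component zero are trivial
  have htpos : 0 < t.val := ZMod.val_pos.mpr ht
  have hzero : ∀ x : ZMod p, φ (x, (0 : ZMod ψ)) = φ (0, 0) → x = 0 := by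
    intro x hx
    by_contra hx0
    obtain ⟨n, hn⟩ := hcan x.val (ZMod.val_pos.mpr hx0) (ZMod.val_lt x)
    apply hn
    have h1 := hcongr (x, (0 : ZMod ψ)) (0, 0) hx (((n : ℕ) : ZMod p), 0)
    rw [gmul_e_left] at h1
    have hg1 : gmul b p ψ (x, (0 : ZMod ψ)) (((n : ℕ) : ZMod p), 0) =
        ((((n + x.val : ℕ)) : ZMod p), (0 : ZMod ψ)) := by
      rw [gmul_def]
      refine Prod.ext ?_ (by simp)
      simp only [ZMod.val_zero, pow_zero, mul_one]
      push_cast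
      rw [ZMod.natCast_rightInverse x]
    rw [hg1] at h1
    rw [hF (((n : ℕ) : ZMod p), 0), hF ((((n + x.val : ℕ)) : ZMod p), 0)]
    rw [h1]
  -- divisibility of second components by t.val
  have hdvd : ∀ (x : ZMod p) (y : ZMod ψ), φ (x, y) = φ (0, 0) →
      t.val ∣ y.val := by
    intro x y hxy
    set a := y.val / t.val with ha
    set r := y.val % t.val with hr
    rcases Nat.eq_zero_or_pos r with hr0 | hr0
    · exact Nat.dvd_of_mod_eq_zero hr0
    have hrlt : r < t.val := Nat.mod_lt _ htpos
    have haψ : a ≤ ψ := le_of_lt (lt_of_le_of_lt (Nat.div_le_self _ _) (ZMod.val_lt y))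
    set k := ψ - a with hk
    set z := gmul b p ψ (pw k) (x, y) with hzdef
    have hzC : φ z = φ (0, 0) := hCmul _ _ (hpwC k) hxy
    have hz2 : z.2 = ((r : ℕ) : ZMod ψ) := by
      rw [hzdef, gmul_def]
      simp only
      rw [hpw2]
      have hyc : y = ((y.val : ℕ) : ZMod ψ) := (ZMod.natCast_rightInverse y).symm
      rw [hyc, ← Nat.cast_add]
      have hle : a * t.val ≤ ψ * t.val := Nat.mul_le_mul_right _ haψ
      have hy : y.val = a * t.val + r := by
        rw [Nat.mul_comm]
        exact (Nat.div_add_mod y.val t.val).symm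
      have harith : k * t.val + y.val = ψ * t.val + r := by
        rw [hy, hk, Nat.sub_mul, ← Nat.add_assoc, Nat.sub_add_cancel hle]
      rw [harith]
      simp [Nat.cast_add, Nat.cast_mul, ZMod.natCast_self]
    have hz2v : z.2.val = r := by
      rw [hz2]
      exact ZMod.val_cast_of_lt (lt_of_lt_of_le hrlt (le_of_lt (ZMod.val_lt t)))
    have hz2ne : z.2 ≠ 0 := by
      intro h
      rw [h, ZMod.val_zero] at hz2v
      omega
    have := hmin z.1 z.2 (by rw [Prod.mk.eta]; exact hzC) hz2ne
    omega
  -- pigeonhole: a positive power equal to identity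
  have hNex : ∃ N, 0 < N ∧ pw N = (0, 0) := by
    obtain ⟨i, j, hij, hije⟩ := Finite.exists_ne_map_eq_of_infinite pw
    rcases Nat.lt_or_ge i j with hlt | hge
    · refine ⟨j - i, by omega, ?_⟩
      have : pw j = gmul b p ψ (pw i) (pw (j - i)) := by
        rw [← hpw_add]; congr 1; omega
      have h2 : gmul b p ψ (pw i) (pw (j - i)) = gmul b p ψ (pw i) (0, 0) := by
        rw [← this, gmul_e_right, hije]
      exact hcancel _ _ _ h2
    · have hlt : j < i := by omega
      refine ⟨i - j, by omega, ?_⟩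
      have : pw i = gmul b p ψ (pw j) (pw (i - j)) := by
        rw [← hpw_add]; congr 1; omega
      have h2 : gmul b p ψ (pw j) (pw (i - j)) = gmul b p ψ (pw j) (0, 0) := by
        rw [← this, gmul_e_right, hije]
      exact hcancel _ _ _ h2
  obtain ⟨N, hN0, hNe⟩ := hNex
  have hpwN : ∀ m, pw (m * N) = (0, 0) := by
    intro m
    induction m with
    | zero => simpa using hpw0
    | succ m ih =>
        rw [Nat.succ_mul, hpw_add, ih, hNe, gmul_e_right]
  -- main extensionality
  ext q
  simp only [Set.mem_setOf_eq]
  constructor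
  · intro hq
    obtain ⟨x, y⟩ := q
    obtain ⟨a, haa⟩ := hdvd x y hq
    have haψ : a ≤ ψ := by
      have h1 : a ≤ t.val * a := Nat.le_mul_of_pos_left a htpos
      have h2 : t.val * a < ψ := by rw [← haa]; exact ZMod.val_lt y
      omega
    set M := ψ - a with hM
    set z := gmul b p ψ (pw M) (x, y) with hzdef
    have hzC : φ z = φ (0, 0) := hCmul _ _ (hpwC M) hq
    have hz2 : z.2 = 0 := by
      rw [hzdef, gmul_def]
      simp only
      rw [hpw2]
      have hyc : y = ((y.val : ℕ) : ZMod ψ) := (ZMod.natCast_rightInverse y).symm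
      rw [hyc, ← Nat.cast_add]
      have hle : a * t.val ≤ ψ * t.val := Nat.mul_le_mul_right _ haψ
      have harith : M * t.val + y.val = ψ * t.val := by
        rw [haa, Nat.mul_comm t.val a, hM, Nat.sub_mul, Nat.sub_add_cancel hle]
      rw [harith]
      simp [Nat.cast_mul, ZMod.natCast_self]
    have hz1 : z.1 = 0 := by
      apply hzero
      have hez : (z.1, (0 : ZMod ψ)) = z := by
        rw [← hz2]
      rw [hez]
      exact hzC
    have hze : z = (0, 0) := Prod.ext hz1 hz2
    set n := M * N - M with hn
    have hMn : M + n = M * N := by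
      have : M ≤ M * N := Nat.le_mul_of_pos_right _ hN0
      omega
    have h2 : gmul b p ψ (pw M) (pw n) = gmul b p ψ (pw M) (x, y) := by
      rw [← hpw_add, hMn, hpwN M, ← hze, hzdef]
    have := hcancel _ _ _ h2
    exact ⟨n, this.symm⟩
  · rintro ⟨n, rfl⟩
    exact hpwC n
end

section
/- Under the same hypotheses, the set R of final residues is a union of orbits of the permutation x ↦ x·b^t + s on Z/pZ. -/
/-- The permutation `j_{s,t} : x ↦ x·b^t + s` of `Z/pZ`. -/
def jST (b p ψ : ℕ) (s : ZMod p) (t : ZMod ψ) (x : ZMod p) : ZMod p :=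
  x * (b : ZMod p) ^ t.val + s

/-- Under the same hypotheses as for the orbit description of the class of
`(0,0)`, the set `R` of final residues is a union of orbits of
`j_{s,t} : x ↦ x·b^t + s` on `Z/pZ`. -/
theorem residues_union_of_orbits (b p ψ : ℕ) (hb : 2 ≤ b) (hp : 1 ≤ p)
    (hcop : Nat.Coprime b p) (hψ : ψ = orderOf (b : ZMod p))
    (R : Set (ZMod p))
    (hcan : ∀ q : ℕ, 0 < q → q < p →
      ∃ n : ℕ, ¬ (((n : ZMod p) ∈ R) ↔ (((n + q : ℕ) : ZMod p) ∈ R)))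
    {Q' : Type} (z' g' : Q' → Q') (F' : Set Q')
    (φ : ZMod p × ZMod ψ → Q')
    (hsurj : Function.Surjective φ)
    (hz : ∀ q, φ (mpZero p ψ q) = z' (φ q))
    (hg : ∀ q, φ (mpG b p ψ q) = g' (φ q))
    (hF : ∀ q : ZMod p × ZMod ψ, q.1 ∈ R ↔ φ q ∈ F')
    (s : ZMod p) (t : ZMod ψ)
    (hst : φ (s, t) = φ (0, 0)) (ht : t ≠ 0)
    (hmin : ∀ (x : ZMod p) (y : ZMod ψ),
      φ (x, y) = φ (0, 0) → y ≠ 0 → t.val ≤ y.val) :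
    R = ⋃ x ∈ R, {y : ZMod p | ∃ n : ℕ, y = (jST b p ψ s t)^[n] x} := by
  have hiter : ∀ (n : ℕ) (q : ZMod p × ZMod ψ),
      φ ((mpG b p ψ)^[n] q) = g'^[n] (φ q) := by
    intro n
    induction n with
    | zero => intro q; rfl
    | succ n ih =>
      intro q
      rw [Function.iterate_succ_apply, Function.iterate_succ_apply, ih, hg]
  have hGiter : ∀ (n : ℕ) (a : ZMod p) (u : ZMod ψ),
      (mpG b p ψ)^[n] (a, u) = (a + n * (b : ZMod p) ^ u.val, u) := by
    intro n
    induction n with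
    | zero => intro a u; simp
    | succ n ih =>
      intro a u
      rw [Function.iterate_succ_apply, mpG]
      simp only [ih]
      push_cast
      ring_nf
  have hstep : ∀ x : ZMod p, x ∈ R ↔ jST b p ψ s t x ∈ R := by
    intro x
    have h1 : φ ((mpG b p ψ)^[x.val] (s, t)) = φ ((mpG b p ψ)^[x.val] (0, 0)) := by
      rw [hiter, hiter, hst]
    rw [hGiter, hGiter] at h1
    haveI : NeZero p := ⟨by omega⟩
    have hx : ((x.val : ℕ) : ZMod p) = x := by simp [ZMod.natCast_val, ZMod.cast_id]
    have hz0 : (ZMod.val (0 : ZMod ψ)) = 0 := by cases ψ <;> rfl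
    rw [hz0] at h1
    simp only [pow_zero, mul_one, zero_add] at h1
    have h2 : s + (x.val : ZMod p) * (b : ZMod p) ^ t.val = jST b p ψ s t x := by
      rw [jST, hx]; ring
    rw [h2, hx] at h1
    rw [hF (jST b p ψ s t x, t), hF (x, (0 : ZMod ψ))]
    rw [h1]
  have hiterR : ∀ (n : ℕ) (x : ZMod p), x ∈ R → (jST b p ψ s t)^[n] x ∈ R := by
    intro n
    induction n with
    | zero => intro x hx; exact hx
    | succ n ih =>
      intro x hx
      rw [Function.iterate_succ_apply]
      exact ih _ ((hstep x).mp hx)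
  ext y
  constructor
  · intro hy
    exact Set.mem_biUnion hy ⟨0, rfl⟩
  · intro hy
    rcases Set.mem_iUnion₂.mp hy with ⟨x, hx, n, hn⟩
    rw [hn]; exact hiterR n x hx
end

section
/- If a deterministic automaton A over the digit alphabet is a quotient of the Pascal automaton P_{R,p}, then for every state q of A, the automaton A_q obtained from A by taking q as initial state is a quotient of P_{S,p} for some set of residues S ⊆ Z/pZ. In particular, if the new initial state of a Pascal automaton is (s,t), the resulting automaton equals P_{S,p} with S = { (r−s)·b^{−t} : r ∈ R }, via the state correspondence (x,y) ↦ (s + x·b^t, y + t). -/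
lemma pascalAux (b p ψ : ℕ) (hp : 1 ≤ p)
    (hcop : Nat.Coprime b p) (hψ : ψ = orderOf (b : ZMod p))
    (R : Set (ZMod p)) (s : ZMod p) (t : ZMod ψ) :
    (fun q : ZMod p × ZMod ψ => (s + q.1 * (b : ZMod p) ^ t.val, q.2 + t)) (0, 0) = (s, t) ∧
    Function.Bijective (fun q : ZMod p × ZMod ψ => (s + q.1 * (b : ZMod p) ^ t.val, q.2 + t)) ∧
    (∀ q (a : ℕ),
      (fun q : ZMod p × ZMod ψ => (s + q.1 * (b : ZMod p) ^ t.val, q.2 + t)) (pascalStep b p ψ q a)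
        = pascalStep b p ψ ((fun q : ZMod p × ZMod ψ => (s + q.1 * (b : ZMod p) ^ t.val, q.2 + t)) q) a) ∧
    (∀ q : ZMod p × ZMod ψ,
      q.1 ∈ {x : ZMod p | ∃ r ∈ R, x = (r - s) * ((b : ZMod p) ^ t.val)⁻¹}
        ↔ ((fun q : ZMod p × ZMod ψ => (s + q.1 * (b : ZMod p) ^ t.val, q.2 + t)) q).1 ∈ R) := by
  haveI : NeZero p := ⟨by omega⟩
  have hbu : IsUnit (b : ZMod p) :=
    ⟨ZMod.unitOfCoprime b hcop, ZMod.coe_unitOfCoprime b hcop⟩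
  have hψpos : 0 < ψ := by
    rw [hψ, ← ZMod.coe_unitOfCoprime b hcop, orderOf_units]
    exact orderOf_pos _
  haveI : NeZero ψ := ⟨hψpos.ne'⟩
  set c : ZMod p := (b : ZMod p) ^ t.val with hc
  have hcu : IsUnit c := hbu.pow _
  have hpow : ∀ u v : ZMod ψ,
      (b : ZMod p) ^ (u + v).val = (b : ZMod p) ^ u.val * (b : ZMod p) ^ v.val := by
    intro u v
    have hone : (b : ZMod p) ^ ψ = 1 := by rw [hψ]; exact pow_orderOf_eq_one _
    rw [ZMod.val_add, ← pow_eq_pow_mod _ hone, pow_add]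
  refine ⟨by simp, ?_, ?_, ?_⟩
  · constructor
    · rintro ⟨x1, x2⟩ ⟨y1, y2⟩ h
      simp only [Prod.mk.injEq] at h
      obtain ⟨h1, h2⟩ := h
      have hx : x1 = y1 := by
        have := congrArg (· * c⁻¹) (add_left_cancel h1)
        simpa [mul_assoc, ZMod.mul_inv_of_unit c hcu] using this
      have hy : x2 = y2 := by
        have := congrArg (· - t) h2
        simpa using this
      simp [hx, hy]
    · rintro ⟨x1, x2⟩
      refine ⟨((x1 - s) * c⁻¹, x2 - t), ?_⟩
      simp [mul_assoc, ZMod.inv_mul_of_unit c hcu]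
  · rintro ⟨x1, x2⟩ a
    simp only [pascalStep]
    refine Prod.ext ?_ ?_
    · simp only
      rw [hpow x2 t]
      ring
    · simp only
      ring
  · rintro ⟨x1, x2⟩
    simp only [Set.mem_setOf_eq]
    constructor
    · rintro ⟨r, hr, rfl⟩
      have : (r - s) * c⁻¹ * c = r - s := by
        rw [mul_assoc, ZMod.inv_mul_of_unit c hcu, mul_one]
      simpa [this] using hr
    · intro h
      exact ⟨s + x1 * c, h, by
        rw [add_sub_cancel_left, mul_assoc, ZMod.mul_inv_of_unit c hcu, mul_one]⟩

/-- If `A` is a quotient (via the covering `φ`) of the Pascal automaton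
`P_{R,p}`, then for every state `q` of `A`, the automaton `A_q` (same automaton
with initial state `q`) is a quotient of `P_{S,p}` for some residue set `S`.
In particular, taking `(s,t)` as new initial state of a Pascal automaton
yields `P_{S,p}` with `S = {(r - s)·b^{-t} | r ∈ R}`, via the state
correspondence `(x,y) ↦ (s + x·b^t, y + t)`. -/
theorem quotient_initial_state_change (b p ψ : ℕ) (hb : 2 ≤ b) (hp : 1 ≤ p)
    (hcop : Nat.Coprime b p) (hψ : ψ = orderOf (b : ZMod p))
    (R : Set (ZMod p))
    {Q : Type} (δ : Q → ℕ → Q) (F : Set Q)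
    (φ : ZMod p × ZMod ψ → Q)
    (hsurj : Function.Surjective φ)
    (hstep : ∀ q (a : ℕ), a < b → φ (pascalStep b p ψ q a) = δ (φ q) a)
    (hF : ∀ q : ZMod p × ZMod ψ, q.1 ∈ R ↔ φ q ∈ F) :
    -- every `A_q` is a quotient of some `P_{S,p}`
    (∀ qA : Q, ∃ S : Set (ZMod p), ∃ φ' : ZMod p × ZMod ψ → Q,
        Function.Surjective φ' ∧ φ' (0, 0) = qA ∧
        (∀ q (a : ℕ), a < b → φ' (pascalStep b p ψ q a) = δ (φ' q) a) ∧
        (∀ q : ZMod p × ZMod ψ, q.1 ∈ S ↔ φ' q ∈ F)) ∧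
    -- explicit description for the Pascal automaton itself
    (∀ (s : ZMod p) (t : ZMod ψ),
      ∀ S : Set (ZMod p),
        S = {x : ZMod p | ∃ r ∈ R, x = (r - s) * ((b : ZMod p) ^ t.val)⁻¹} →
        ∀ θ : ZMod p × ZMod ψ → ZMod p × ZMod ψ,
          θ = (fun q => (s + q.1 * (b : ZMod p) ^ t.val, q.2 + t)) →
          θ (0, 0) = (s, t) ∧ Function.Bijective θ ∧
          (∀ q (a : ℕ), a < b →
            θ (pascalStep b p ψ q a) = pascalStep b p ψ (θ q) a) ∧
          (∀ q : ZMod p × ZMod ψ, q.1 ∈ S ↔ (θ q).1 ∈ R)) := by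
  constructor
  · intro qA
    obtain ⟨⟨s, t⟩, hq⟩ := hsurj qA
    obtain ⟨h0, hbij, hcomm, hS⟩ := pascalAux b p ψ hp hcop hψ R s t
    refine ⟨{x : ZMod p | ∃ r ∈ R, x = (r - s) * ((b : ZMod p) ^ t.val)⁻¹},
      φ ∘ (fun q : ZMod p × ZMod ψ => (s + q.1 * (b : ZMod p) ^ t.val, q.2 + t)),
      hsurj.comp hbij.surjective, by simp [h0, hq], ?_, ?_⟩
    · intro q a ha
      simp only [Function.comp_apply, hcomm q a]
      exact hstep _ a ha
    · intro q
      rw [hS q]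
      exact hF _
  · intro s t S hSdef θ hθdef
    subst hSdef; subst hθdef
    obtain ⟨h0, hbij, hcomm, hS⟩ := pascalAux b p ψ hp hcop hψ R s t
    exact ⟨h0, hbij, fun q a _ => hcomm q a, hS⟩
end

section
/- Let φ : A → B be a covering (surjective automaton morphism) between finite deterministic automata. Then every strongly connected component C' of B is the image under φ of some strongly connected component C of A; moreover C can be chosen so that φ restricted to C is a morphism from C onto C' (every internal transition of C' lifts to an internal transition of C). -/
/-- Reachability in a deterministic automaton with transition function `δ`. -/
def Reaches {Q A : Type} (δ : Q → A → Q) (q q' : Q) : Prop :=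
  ∃ w : List A, List.foldl δ q w = q'

/-- The strongly connected component of a state. -/
def Scc {Q A : Type} (δ : Q → A → Q) (q : Q) : Set Q :=
  {q' | Reaches δ q q' ∧ Reaches δ q' q}

/-- Let `φ : A → B` be a covering (surjective automaton morphism) between
finite deterministic automata. Every SCC of `B` is the image under `φ` of an
SCC of `A`, which may be chosen so that every internal transition of the SCC of
`B` lifts to an internal transition of the SCC of `A`. -/
theorem scc_lifts_along_covering {QA QB A : Type} [Fintype QA] [Fintype QB]
    (δA : QA → A → QA) (δB : QB → A → QB)
    (φ : QA → QB) (hsurj : Function.Surjective φ)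
    (hmor : ∀ q a, φ (δA q a) = δB (φ q) a) :
    ∀ qB : QB, ∃ qA : QA, φ qA = qB ∧
      φ '' Scc δA qA = Scc δB qB ∧
      ∀ r ∈ Scc δA qA, ∀ a : A, δB (φ r) a ∈ Scc δB qB → δA r a ∈ Scc δA qA := by
  classical
  have hfold : ∀ (q : QA) (w : List A),
      φ (List.foldl δA q w) = List.foldl δB (φ q) w := by
    intro q w
    induction w generalizing q with
    | nil => rfl
    | cons a w ih => simp [List.foldl, ih, hmor]
  intro qB
  letI : Preorder QA :=
    { le := Reaches δA
      le_refl := fun q => ⟨[], rfl⟩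
      le_trans := fun p q r ⟨u, hu⟩ ⟨v, hv⟩ =>
        ⟨u ++ v, by rw [List.foldl_append, hu, hv]⟩ }
  obtain ⟨p0, hp0⟩ := hsurj qB
  have hne : (Finset.univ.filter (fun p => φ p = qB)).Nonempty :=
    ⟨p0, by simp [hp0]⟩
  obtain ⟨qA, hqAmem, hmax⟩ : ∃ m ∈ Finset.univ.filter (fun p => φ p = qB),
      ∀ x ∈ Finset.univ.filter (fun p => φ p = qB), ¬ m < x := by
    obtain ⟨m, hm⟩ := Finset.exists_maximal hne
    exact ⟨m, hm.1, fun x hx hlt => hlt.2 (hm.2 hx hlt.1)⟩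
  have hφqA : φ qA = qB := by simpa using hqAmem
  -- key property: anything in the fiber reachable from qA reaches back
  have hback : ∀ p, φ p = qB → Reaches δA qA p → Reaches δA p qA := by
    intro p hp hr
    by_contra hn
    exact hmax p (by simp [hp]) ⟨hr, hn⟩
  refine ⟨qA, hφqA, ?_, ?_⟩
  · apply Set.Subset.antisymm
    · rintro s ⟨r, ⟨⟨u, hu⟩, ⟨v, hv⟩⟩, rfl⟩
      exact ⟨⟨u, by rw [← hφqA, ← hfold, hu]⟩, ⟨v, by rw [← hfold, hv, hφqA]⟩⟩
    · rintro s ⟨⟨u, hu⟩, ⟨v, hv⟩⟩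
      set r := List.foldl δA qA u with hr
      have hφr : φ r = s := by rw [hr, hfold, hφqA, hu]
      set p := List.foldl δA r v with hp
      have hφp : φ p = qB := by rw [hp, hfold, hφr, hv]
      have hreach : Reaches δA qA p :=
        ⟨u ++ v, by rw [List.foldl_append, ← hr, ← hp]⟩
      obtain ⟨w, hw⟩ := hback p hφp hreach
      refine ⟨r, ⟨⟨u, hr.symm⟩, ⟨v ++ w, ?_⟩⟩, hφr⟩
      rw [List.foldl_append, ← hp, hw]
  · rintro r ⟨⟨u, hu⟩, -⟩ a ⟨-, ⟨v, hv⟩⟩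
    set r' := δA r a with hr'
    have hφr' : φ r' = δB (φ r) a := hmor r a
    set p := List.foldl δA r' v with hp
    have hφp : φ p = qB := by rw [hp, hfold, hφr', hv]
    have hreach : Reaches δA qA p := by
      refine ⟨(u ++ [a]) ++ v, ?_⟩
      rw [List.foldl_append, List.foldl_append, hu]
      simp [← hr', ← hp]
    obtain ⟨w, hw⟩ := hback p hφp hreach
    refine ⟨⟨u ++ [a], by rw [List.foldl_append, hu]; simp [hr']⟩, ⟨v ++ w, ?_⟩⟩
    rw [List.foldl_append, ← hp, hw]
end

section
/- Let A be a deterministic automaton whose states, apart from a finite initial part, lie in a single strongly connected component S accepting, when started from the entry state j, the periodic set {n : n mod p ∈ R}. If u is the unique word leading from the initial state i to j and every accepted word factors as w = u·v with v accepted by S_j, then the set of numbers accepted by A is ultimately periodic with period p·b^{|u|}. -/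
theorem wordVal_append (b : ℕ) (u v : List ℕ) :
    wordVal b (u ++ v) = wordVal b u + b ^ u.length * wordVal b v := by
  induction u with
  | nil => simp [wordVal]
  | cons a u ih => simp [wordVal, ih]; ring

theorem wordVal_lt (b : ℕ) (hb : 1 ≤ b) (u : List ℕ) (hu : ∀ a ∈ u, a < b) :
    wordVal b u < b ^ u.length := by
  induction u with
  | nil => simp [wordVal]
  | cons a u ih =>
    have ha : a < b := hu a (by simp)
    have h2 : wordVal b u < b ^ u.length := ih (fun x hx => hu x (by simp [hx]))
    have : a + b * wordVal b u < b * (wordVal b u + 1) := by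
      rw [Nat.mul_add, Nat.mul_one]; omega
    calc a + b * wordVal b u < b * (wordVal b u + 1) := this
      _ ≤ b * b ^ u.length := by exact Nat.mul_le_mul_left b h2
      _ = b ^ (a :: u).length := by rw [List.length_cons]; ring

/-- Let `A` be a deterministic automaton over the digit alphabet whose accepted
words all factor as `u·v` where `u` is the unique word leading from the initial
state `i` to the entry state `j` of the strongly connected part `S`, and where
the subautomaton `S_j` (started at `j`) accepts exactly the numbers
`{n | n mod p ∈ R}`.  Then the set of numbers accepted by `A` is ultimately
periodic with period `p·b^{|u|}`. -/
theorem branch_accepts_ultimately_periodic (b p : ℕ) (hb : 2 ≤ b) (hp : 1 ≤ p)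
    (R : Set (ZMod p))
    {Q : Type} (δ : Q → ℕ → Q) (i : Q) (F : Set Q)
    (u : List ℕ) (hu : ∀ a ∈ u, a < b)
    (j : Q) (hj : List.foldl δ i u = j)
    -- every accepted word factors through `u` and `S_j`
    (hfactor : ∀ w : List ℕ, List.foldl δ i w ∈ F →
      ∃ v : List ℕ, w = u ++ v ∧ List.foldl δ j v ∈ F)
    -- `S_j` accepts exactly the numbers `{n | n mod p ∈ R}`
    (hSj : ∀ n : ℕ, ((n : ZMod p) ∈ R) ↔
      ∃ v : List ℕ, (∀ a ∈ v, a < b) ∧ wordVal b v = n ∧ List.foldl δ j v ∈ F) :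
    ∃ m : ℕ, ∀ n : ℕ, m ≤ n →
      ((∃ w : List ℕ, (∀ a ∈ w, a < b) ∧ wordVal b w = n ∧ List.foldl δ i w ∈ F) ↔
       (∃ w : List ℕ, (∀ a ∈ w, a < b) ∧ wordVal b w = n + p * b ^ u.length ∧
          List.foldl δ i w ∈ F)) := by
  -- accepted numbers are exactly those of the form `val u + b^|u| * m` with `m mod p ∈ R`
  have key : ∀ n : ℕ,
      (∃ w : List ℕ, (∀ a ∈ w, a < b) ∧ wordVal b w = n ∧ List.foldl δ i w ∈ F) ↔
      (∃ m : ℕ, n = wordVal b u + b ^ u.length * m ∧ ((m : ZMod p) ∈ R)) := by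
    intro n
    constructor
    · rintro ⟨w, hw, hval, hacc⟩
      obtain ⟨v, rfl, hvacc⟩ := hfactor w hacc
      refine ⟨wordVal b v, ?_, ?_⟩
      · rw [← hval, wordVal_append]
      · exact (hSj (wordVal b v)).2 ⟨v, fun a ha => hw a (by simp [ha]), rfl, hvacc⟩
    · rintro ⟨m, rfl, hm⟩
      obtain ⟨v, hv, hvval, hvacc⟩ := (hSj m).1 hm
      refine ⟨u ++ v, ?_, ?_, ?_⟩
      · intro a ha; rcases List.mem_append.1 ha with h | h
        · exact hu a h
        · exact hv a h
      · rw [wordVal_append, hvval]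
      · rw [List.foldl_append, hj]; exact hvacc
  refine ⟨0, fun n _ => ?_⟩
  rw [key, key]
  have hub : wordVal b u < b ^ u.length := wordVal_lt b (by omega) u hu
  constructor
  · rintro ⟨m, rfl, hm⟩
    refine ⟨m + p, by ring, ?_⟩
    have : ((m + p : ℕ) : ZMod p) = (m : ℕ) := by push_cast; simp
    rwa [this]
  · rintro ⟨m, hval, hm⟩
    have hmp : p ≤ m := by
      by_contra h
      have : b ^ u.length * m + b ^ u.length ≤ b ^ u.length * p := by
        have : m + 1 ≤ p := by omega
        calc b ^ u.length * m + b ^ u.length = b ^ u.length * (m + 1) := by ring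
          _ ≤ b ^ u.length * p := Nat.mul_le_mul_left _ this
      have hc : p * b ^ u.length = b ^ u.length * p := Nat.mul_comm _ _
      omega
    refine ⟨m - p, ?_, ?_⟩
    · have : b ^ u.length * m = b ^ u.length * (m - p) + b ^ u.length * p := by
        rw [← Nat.mul_add]; congr 1; omega
      have hc : p * b ^ u.length = b ^ u.length * p := Nat.mul_comm _ _
      omega
    · have : ((m - p : ℕ) : ZMod p) = (m : ℕ) := by
        have : m - p + p = m := by omega
        calc ((m - p : ℕ) : ZMod p) = ((m - p : ℕ) : ZMod p) + (p : ZMod p) := by simp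
          _ = ((m - p + p : ℕ) : ZMod p) := by push_cast; ring
          _ = (m : ℕ) := by rw [this]
      rwa [this]
end
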